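/- (Lipschitz continuity of the kernel-time-derivative operator.) Let λ̄, ᾱ > 0. For i ∈ {1,2}, let λᵢ, μᵢ : [0,1] → ℝ be continuous with sup |λᵢ| ≤ λ̄ and sup |μᵢ| ≤ ᾱ, let Gᵢ be the unique continuous solution on D = {(ξ,η) : 0 ≤ η ≤ ξ, ξ + η ≤ 2} of Gᵢ(ξ,η) = −(1/4)∫_η^ξ λᵢ(s/2) ds + (1/4)∫_η^ξ ∫₀^η λᵢ((σ−s)/2) Gᵢ(σ,s) ds dσ, and let Hᵢ be the unique continuous solution of Hᵢ(ξ,η) = −(1/4)∫_η^ξ μᵢ(s/2) ds + (1/4)∫_η^ξ ∫₀^η [ μᵢ((σ−s)/2)·Gᵢ(σ,s) + λᵢ((σ−s)/2)·Hᵢ(σ,s) ] ds dσ. Then there exists a constant A > 0, depending only on λ̄ and ᾱ, such that sup_D |H₁ − H₂| ≤ A·( sup_{[0,1]} |λ₁ − λ₂| + sup_{[0,1]} |μ₁ − μ₂| ). -/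

import Mathlib

/-- The image of the triangle `{0 ≤ y ≤ x ≤ 1}` under `ξ = x + y`, `η = x - y`. -/
def Dtri : Set (ℝ × ℝ) := {p | 0 ≤ p.2 ∧ p.2 ≤ p.1 ∧ p.1 + p.2 ≤ 2}

open MeasureTheory

lemma Dtri_isClosed : IsClosed Dtri := by
  have h1 : IsClosed {p : ℝ × ℝ | 0 ≤ p.2} := isClosed_le continuous_const continuous_snd
  have h2 : IsClosed {p : ℝ × ℝ | p.2 ≤ p.1} := isClosed_le continuous_snd continuous_fst
  have h3 : IsClosed {p : ℝ × ℝ | p.1 + p.2 ≤ 2} :=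
    isClosed_le (continuous_fst.add continuous_snd) continuous_const
  have : Dtri = {p : ℝ × ℝ | 0 ≤ p.2} ∩ ({p | p.2 ≤ p.1} ∩ {p | p.1 + p.2 ≤ 2}) := by
    ext p; constructor
    · rintro ⟨a, b, c⟩; exact ⟨a, b, c⟩
    · rintro ⟨a, b, c⟩; exact ⟨a, b, c⟩
  rw [this]; exact h1.inter (h2.inter h3)

lemma Dtri_compact : IsCompact Dtri := by
  refine ((isCompact_Icc (a := (0:ℝ)) (b := 2)).prod (isCompact_Icc (a := (0:ℝ)) (b := 2))).of_isClosed_subset Dtri_isClosed ?_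
  rintro ⟨x, y⟩ ⟨h1, h2, h3⟩
  simp only [Set.mem_prod, Set.mem_Icc]
  constructor <;> constructor <;> dsimp at * <;> linarith

lemma mem_Dtri {ξ η σ s : ℝ} (hη : 0 ≤ η) (hsum : ξ + η ≤ 2) (hσ1 : η ≤ σ) (hσ2 : σ ≤ ξ)
    (hs1 : 0 ≤ s) (hs2 : s ≤ η) : (σ, s) ∈ Dtri :=
  ⟨hs1, hs2.trans hσ1, by dsimp; linarith⟩

lemma half_diff_mem {q : ℝ × ℝ} (hq : q ∈ Dtri) : (q.1 - q.2) / 2 ∈ Set.Icc (0:ℝ) 1 := by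
  obtain ⟨h1, h2, h3⟩ := hq
  constructor
  · linarith
  · linarith

lemma innerIntegrable (F : ℝ → ℝ → ℝ) (hF : ContinuousOn (fun q : ℝ × ℝ => F q.1 q.2) Dtri)
    {η σ : ℝ} (hη : 0 ≤ η)
    (hsub : ∀ s ∈ Set.Icc (0:ℝ) η, (σ, s) ∈ Dtri) :
    IntervalIntegrable (fun s => F σ s) volume 0 η := by
  apply ContinuousOn.intervalIntegrable
  rw [Set.uIcc_of_le hη]
  exact hF.comp ((continuous_const.prodMk continuous_id).continuousOn) hsub

lemma singleIntegrable (f : ℝ → ℝ) (hf : ContinuousOn f (Set.Icc 0 1)) {η ξ : ℝ}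
    (hη : 0 ≤ η) (hηξ : η ≤ ξ) (hξ : ξ ≤ 2) :
    IntervalIntegrable (fun s => f (s / 2)) volume η ξ := by
  apply ContinuousOn.intervalIntegrable
  rw [Set.uIcc_of_le hηξ]
  refine hf.comp (Continuous.continuousOn (by continuity)) ?_
  intro s hs
  exact ⟨by linarith [hs.1], by linarith [hs.2]⟩

lemma lemC (F : ℝ → ℝ → ℝ) (hF : ContinuousOn (fun q : ℝ × ℝ => F q.1 q.2) Dtri) {η ξ : ℝ} (hη : 0 ≤ η)
    (hsub : ∀ σ ∈ Set.Icc η ξ, ∀ s ∈ Set.Icc (0:ℝ) η, (σ, s) ∈ Dtri) :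
    ContinuousOn (fun σ => ∫ s in (0:ℝ)..η, F σ s) (Set.Icc η ξ) := by
  intro σ₀ hσ₀
  rw [Metric.continuousWithinAt_iff]
  intro ε hε
  have hUC := Dtri_compact.uniformContinuousOn_of_continuous hF
  rw [Metric.uniformContinuousOn_iff] at hUC
  obtain ⟨δ, hδ, hUC⟩ := hUC (ε / (η + 1)) (by positivity)
  refine ⟨δ, hδ, fun σ hσ hdist => ?_⟩
  have hint₁ : IntervalIntegrable (fun s => F σ s) volume 0 η :=
    innerIntegrable F hF hη (hsub σ hσ)
  have hint₂ : IntervalIntegrable (fun s => F σ₀ s) volume 0 η :=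
    innerIntegrable F hF hη (hsub σ₀ hσ₀)
  rw [Real.dist_eq, ← intervalIntegral.integral_sub hint₁ hint₂]
  have hb : ‖∫ s in (0:ℝ)..η, (F σ s - F σ₀ s)‖ ≤ (ε / (η + 1)) * |η - 0| := by
    apply intervalIntegral.norm_integral_le_of_norm_le_const
    intro s hs
    rw [Set.uIoc_of_le hη] at hs
    have hs' : s ∈ Set.Icc (0:ℝ) η := ⟨hs.1.le, hs.2⟩
    have hd : dist ((σ, s) : ℝ × ℝ) ((σ₀, s) : ℝ × ℝ) < δ := by
      rw [Prod.dist_eq]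
      simp only [dist_self]
      rw [max_eq_left dist_nonneg]
      exact hdist
    have := hUC (σ, s) (hsub σ hσ s hs') (σ₀, s) (hsub σ₀ hσ₀ s hs') hd
    rw [Real.dist_eq] at this
    rw [Real.norm_eq_abs]
    exact this.le
  rw [Real.norm_eq_abs, sub_zero, abs_of_nonneg hη] at hb
  calc |∫ s in (0:ℝ)..η, (F σ s - F σ₀ s)| ≤ ε / (η + 1) * η := hb
    _ < ε := by rw [div_mul_eq_mul_div, div_lt_iff₀ (by linarith)]; nlinarith

lemma outerIntegrable (F : ℝ → ℝ → ℝ) (hF : ContinuousOn (fun q : ℝ × ℝ => F q.1 q.2) Dtri) {η ξ : ℝ} (hη : 0 ≤ η)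
    (hηξ : η ≤ ξ)
    (hsub : ∀ σ ∈ Set.Icc η ξ, ∀ s ∈ Set.Icc (0:ℝ) η, (σ, s) ∈ Dtri) :
    IntervalIntegrable (fun σ => ∫ s in (0:ℝ)..η, F σ s) volume η ξ := by
  apply ContinuousOn.intervalIntegrable
  rw [Set.uIcc_of_le hηξ]
  exact lemC F hF hη hsub

lemma split_integral (F₁ F₂ : ℝ → ℝ → ℝ)
    (hF₁ : ContinuousOn (fun q : ℝ × ℝ => F₁ q.1 q.2) Dtri)
    (hF₂ : ContinuousOn (fun q : ℝ × ℝ => F₂ q.1 q.2) Dtri)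
    {ξ η : ℝ} (hη : 0 ≤ η) (hηξ : η ≤ ξ) (hsum : ξ + η ≤ 2) :
    (∫ σ in η..ξ, ∫ s in (0:ℝ)..η, F₁ σ s) - (∫ σ in η..ξ, ∫ s in (0:ℝ)..η, F₂ σ s) =
      ∫ σ in η..ξ, ∫ s in (0:ℝ)..η, (F₁ σ s - F₂ σ s) := by
  have hsub : ∀ σ ∈ Set.Icc η ξ, ∀ s ∈ Set.Icc (0:ℝ) η, (σ, s) ∈ Dtri :=
    fun σ hσ s hs => mem_Dtri hη hsum hσ.1 hσ.2 hs.1 hs.2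
  rw [← intervalIntegral.integral_sub (outerIntegrable F₁ hF₁ hη hηξ hsub)
    (outerIntegrable F₂ hF₂ hη hηξ hsub)]
  apply intervalIntegral.integral_congr
  intro σ hσ
  rw [Set.uIcc_of_le hηξ] at hσ
  exact (intervalIntegral.integral_sub (innerIntegrable F₁ hF₁ hη (hsub σ hσ))
    (innerIntegrable F₂ hF₂ hη (hsub σ hσ))).symm
lemma lemA (F : ℝ × ℝ → ℝ) (η ξ L B : ℝ) (hη : 0 ≤ η) (hηξ : η ≤ ξ) (hL : 0 < L) (hB : 0 ≤ B)
    (hF : ∀ σ ∈ Set.Ioc η ξ, ∀ s ∈ Set.Ioc (0:ℝ) η, |F (σ, s)| ≤ B * Real.exp (L * σ * s)) :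
    |∫ σ in η..ξ, ∫ s in (0:ℝ)..η, F (σ, s)| ≤ B * Real.exp (L * ξ * η) / L := by
  have hstep1 : ∀ σ ∈ Set.Ioc η ξ, |∫ s in (0:ℝ)..η, F (σ, s)| ≤ B * η * Real.exp (L * η * σ) := by
    intro σ hσ
    have hσ0 : 0 ≤ σ := hη.trans hσ.1.le
    have h1 : ‖∫ s in (0:ℝ)..η, F (σ, s)‖ ≤ (B * Real.exp (L * η * σ)) * |η - 0| := by
      apply intervalIntegral.norm_integral_le_of_norm_le_const
      intro s hs
      rw [Set.uIoc_of_le hη] at hs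
      rw [Real.norm_eq_abs]
      calc |F (σ, s)| ≤ B * Real.exp (L * σ * s) := hF σ hσ s hs
        _ ≤ B * Real.exp (L * η * σ) := by
            apply mul_le_mul_of_nonneg_left _ hB
            apply Real.exp_le_exp.mpr
            nlinarith [mul_nonneg (mul_nonneg hL.le hσ0) (sub_nonneg.mpr hs.2)]
    rw [Real.norm_eq_abs, sub_zero, abs_of_nonneg hη] at h1
    calc |∫ s in (0:ℝ)..η, F (σ, s)| ≤ B * Real.exp (L * η * σ) * η := h1
      _ = B * η * Real.exp (L * η * σ) := by ring
  have hgint : IntervalIntegrable (fun σ => B * η * Real.exp (L * η * σ)) volume η ξ :=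
    (Continuous.intervalIntegrable (by continuity)) _ _
  have h2 : |∫ σ in η..ξ, ∫ s in (0:ℝ)..η, F (σ, s)| ≤
      |∫ σ in η..ξ, B * η * Real.exp (L * η * σ)| := by
    rw [← Real.norm_eq_abs (∫ σ in η..ξ, ∫ s in (0:ℝ)..η, F (σ, s))]
    apply intervalIntegral.norm_integral_le_abs_of_norm_le _ hgint
    filter_upwards [ae_restrict_mem measurableSet_uIoc] with σ hσ
    rw [Set.uIoc_of_le hηξ] at hσ
    rw [Real.norm_eq_abs]
    exact hstep1 σ hσ
  refine h2.trans ?_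
  rcases eq_or_lt_of_le hη with h0 | h0
  · subst h0
    simp only [mul_zero, zero_mul]
    rw [intervalIntegral.integral_zero, abs_zero]
    positivity
  · have hc : L * η ≠ 0 := by positivity
    have hcomp : (∫ σ in η..ξ, Real.exp (L * η * σ)) =
        (L * η)⁻¹ * (Real.exp (L * η * ξ) - Real.exp (L * η * η)) := by
      rw [intervalIntegral.integral_comp_mul_left Real.exp hc, smul_eq_mul,
        integral_exp]
    have hval : (∫ σ in η..ξ, B * η * Real.exp (L * η * σ)) =
        B / L * (Real.exp (L * η * ξ) - Real.exp (L * η * η)) := by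
      rw [intervalIntegral.integral_const_mul, hcomp]
      field_simp
    rw [hval]
    have he : Real.exp (L * η * η) ≤ Real.exp (L * η * ξ) := by
      apply Real.exp_le_exp.mpr
      nlinarith [mul_le_mul_of_nonneg_left hηξ (by positivity : (0:ℝ) ≤ L * η)]
    rw [abs_of_nonneg (mul_nonneg (div_nonneg hB hL.le) (sub_nonneg.mpr he))]
    rw [show L * ξ * η = L * η * ξ by ring]
    have h3 : B / L * (Real.exp (L * η * ξ) - Real.exp (L * η * η)) ≤
        B / L * Real.exp (L * η * ξ) := by
      apply mul_le_mul_of_nonneg_left _ (div_nonneg hB hL.le)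
      nlinarith [Real.exp_pos (L * η * η)]
    calc B / L * (Real.exp (L * η * ξ) - Real.exp (L * η * η)) ≤
        B / L * Real.exp (L * η * ξ) := h3
      _ = B * Real.exp (L * η * ξ) / L := by ring
lemma lemB (u Φ : ℝ × ℝ → ℝ) (c a b : ℝ) (hc : 0 ≤ c) (ha : 0 ≤ a) (hb : 0 < b)
    (hu : ContinuousOn u Dtri)
    (hEq : ∀ p ∈ Dtri, |u p| ≤ c + 1 / 4 * |∫ σ in p.2..p.1, ∫ s in (0:ℝ)..p.2, Φ (σ, s)|)
    (hΦ : ∀ q ∈ Dtri, |Φ q| ≤ a + b * |u q|) :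
    ∀ p ∈ Dtri, |u p| ≤ 4 / 3 * (c + a / (4 * b)) * Real.exp (2 * b) := by
  have hO : ((0, 0) : ℝ × ℝ) ∈ Dtri := ⟨le_refl 0, le_refl 0, by norm_num⟩
  have hcont : ContinuousOn (fun q : ℝ × ℝ => |u q| * Real.exp (-(b * q.1 * q.2))) Dtri := by
    exact hu.abs.mul (Continuous.continuousOn (by continuity))
  obtain ⟨p₀, hp₀, hmax⟩ := Dtri_compact.exists_isMaxOn ⟨(0, 0), hO⟩ hcont
  set N := |u p₀| * Real.exp (-(b * p₀.1 * p₀.2)) with hN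
  have hN0 : 0 ≤ N := by positivity
  have hBound : ∀ q ∈ Dtri, |u q| ≤ N * Real.exp (b * q.1 * q.2) := by
    intro q hq
    have h1 : |u q| * Real.exp (-(b * q.1 * q.2)) ≤ N := hmax hq
    have h2 := mul_le_mul_of_nonneg_right h1 (Real.exp_nonneg (b * q.1 * q.2))
    rwa [mul_assoc, ← Real.exp_add, neg_add_cancel, Real.exp_zero, mul_one] at h2
  -- key pointwise estimate
  have key : ∀ p ∈ Dtri, |u p| ≤ c + (a + b * N) * Real.exp (b * p.1 * p.2) / (4 * b) := by
    intro p hp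
    obtain ⟨hη, hηξ, hsum⟩ := hp
    have hA := lemA Φ p.2 p.1 b (a + b * N) hη hηξ hb (by positivity) ?_
    · calc |u p| ≤ c + 1 / 4 * |∫ σ in p.2..p.1, ∫ s in (0:ℝ)..p.2, Φ (σ, s)| :=
          hEq p ⟨hη, hηξ, hsum⟩
        _ ≤ c + 1 / 4 * ((a + b * N) * Real.exp (b * p.1 * p.2) / b) := by
            have := hA; linarith
        _ = c + (a + b * N) * Real.exp (b * p.1 * p.2) / (4 * b) := by
            field_simp
            try ring
    · intro σ hσ s hs
      have hqD : (σ, s) ∈ Dtri := mem_Dtri hη hsum hσ.1.le hσ.2 hs.1.le hs.2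
      have h1 : |Φ (σ, s)| ≤ a + b * |u (σ, s)| := hΦ (σ, s) hqD
      have h2 : |u (σ, s)| ≤ N * Real.exp (b * σ * s) := hBound (σ, s) hqD
      have h3 : 1 ≤ Real.exp (b * σ * s) := by
        apply Real.one_le_exp
        have hσ0 : 0 ≤ σ := hη.trans hσ.1.le
        exact mul_nonneg (mul_nonneg hb.le hσ0) hs.1.le
      nlinarith [mul_le_mul_of_nonneg_left h2 hb.le]
  -- bound on N
  have hw0 : 0 ≤ p₀.1 * p₀.2 := mul_nonneg (hp₀.1.trans hp₀.2.1) hp₀.1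
  have hE1 : 1 ≤ Real.exp (b * p₀.1 * p₀.2) :=
    Real.one_le_exp (by rw [mul_assoc]; exact mul_nonneg hb.le hw0)
  have hcancel : Real.exp (-(b * p₀.1 * p₀.2)) * Real.exp (b * p₀.1 * p₀.2) = 1 := by
    rw [← Real.exp_add]; simp
  have hNE : N * Real.exp (b * p₀.1 * p₀.2) ≤
      c + (a + b * N) * Real.exp (b * p₀.1 * p₀.2) / (4 * b) :=
    calc N * Real.exp (b * p₀.1 * p₀.2)
        = |u p₀| * (Real.exp (-(b * p₀.1 * p₀.2)) * Real.exp (b * p₀.1 * p₀.2)) := by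
          rw [hN]; ring
      _ = |u p₀| := by rw [hcancel, mul_one]
      _ ≤ _ := key p₀ hp₀
  set E := Real.exp (b * p₀.1 * p₀.2) with hEdef
  have hNb : 3 * b * N ≤ 4 * b * c + a := by
    have h4b : (0:ℝ) < 4 * b := by positivity
    have h4' := mul_le_mul_of_nonneg_left hNE h4b.le
    have hsimp : 4 * b * (c + (a + b * N) * E / (4 * b)) = 4 * b * c + (a + b * N) * E := by
      field_simp
      try ring
    rw [hsimp] at h4'
    have h5 : 3 * b * N * E ≤ (4 * b * c + a) * E := by
      nlinarith [mul_nonneg (mul_nonneg hb.le hc) (sub_nonneg.mpr hE1)]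
    have := le_of_mul_le_mul_right h5 (lt_of_lt_of_le one_pos hE1)
    linarith
  have hNfin : N ≤ 4 / 3 * (c + a / (4 * b)) := by
    have heq : 4 / 3 * (c + a / (4 * b)) = (4 * b * c + a) / (3 * b) := by
      field_simp
    rw [heq, le_div_iff₀ (by positivity : (0:ℝ) < 3 * b)]
    nlinarith [hNb]
  intro p hp
  calc |u p| ≤ N * Real.exp (b * p.1 * p.2) := hBound p hp
    _ ≤ (4 / 3 * (c + a / (4 * b))) * Real.exp (2 * b) := by
        apply mul_le_mul hNfin _ (Real.exp_nonneg _) (hN0.trans hNfin)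
        apply Real.exp_le_exp.mpr
        obtain ⟨h1, h2, h3⟩ := hp
        have hp12 : p.1 * p.2 ≤ 2 := by
          nlinarith [mul_nonneg (by linarith : (0:ℝ) ≤ 2 - p.2 - p.1) h1]
        nlinarith [mul_le_mul_of_nonneg_left hp12 hb.le]

lemma quarter_abs (x y : ℝ) : |-(1 / 4) * x + 1 / 4 * y| ≤ 1 / 4 * |x| + 1 / 4 * |y| := by
  calc |-(1 / 4) * x + 1 / 4 * y| ≤ |-(1 / 4) * x| + |1 / 4 * y| := abs_add_le _ _
    _ = 1 / 4 * |x| + 1 / 4 * |y| := by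
        rw [abs_mul, abs_mul, abs_neg, abs_of_nonneg (by norm_num : (0:ℝ) ≤ 1 / 4)]

lemma single_bound (f : ℝ → ℝ) (M : ℝ) {η ξ : ℝ} (hη : 0 ≤ η) (hηξ : η ≤ ξ)
    (hsum : ξ + η ≤ 2) (hf : ∀ x ∈ Set.Icc (0:ℝ) 1, |f x| ≤ M) :
    |∫ s in η..ξ, f (s / 2)| ≤ 2 * M := by
  have hM : 0 ≤ M := le_trans (abs_nonneg _) (hf 0 ⟨le_refl _, zero_le_one⟩)
  have h : ‖∫ s in η..ξ, f (s / 2)‖ ≤ M * |ξ - η| := by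
    apply intervalIntegral.norm_integral_le_of_norm_le_const
    intro s hs
    rw [Set.uIoc_of_le hηξ] at hs
    rw [Real.norm_eq_abs]
    exact hf (s / 2) ⟨by linarith [hs.1.le], by linarith [hs.2]⟩
  rw [Real.norm_eq_abs] at h
  calc |∫ s in η..ξ, f (s / 2)| ≤ M * |ξ - η| := h
    _ ≤ 2 * M := by rw [abs_of_nonneg (by linarith)]; nlinarith

set_option maxHeartbeats 1000000 in
/-- Lipschitz continuity of the kernel-time-derivative operator
`𝒦₁ : (λ̂, λ̂_t) ↦ k̆_t`: there is a constant `A > 0`, depending only on `λ̄` and `ᾱ`,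
such that `sup_D |H₁ - H₂| ≤ A (sup |λ₁ - λ₂| + sup |μ₁ - μ₂|)`. -/
theorem kernel_time_derivative_lipschitz (lambdaBar alphaBar : ℝ)
    (hlam : 0 < lambdaBar) (halpha : 0 < alphaBar) :
    ∃ A : ℝ, 0 < A ∧
      ∀ (lam₁ lam₂ μ₁ μ₂ : ℝ → ℝ) (G₁ G₂ H₁ H₂ : ℝ × ℝ → ℝ),
        ContinuousOn lam₁ (Set.Icc 0 1) → ContinuousOn lam₂ (Set.Icc 0 1) →
        ContinuousOn μ₁ (Set.Icc 0 1) → ContinuousOn μ₂ (Set.Icc 0 1) →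
        (∀ x ∈ Set.Icc (0:ℝ) 1, |lam₁ x| ≤ lambdaBar) →
        (∀ x ∈ Set.Icc (0:ℝ) 1, |lam₂ x| ≤ lambdaBar) →
        (∀ x ∈ Set.Icc (0:ℝ) 1, |μ₁ x| ≤ alphaBar) →
        (∀ x ∈ Set.Icc (0:ℝ) 1, |μ₂ x| ≤ alphaBar) →
        ContinuousOn G₁ Dtri → ContinuousOn G₂ Dtri →
        (∀ p ∈ Dtri,
          G₁ p = -(1 / 4) * (∫ s in p.2..p.1, lam₁ (s / 2)) +
            (1 / 4) * ∫ σ in p.2..p.1, ∫ s in (0:ℝ)..p.2, lam₁ ((σ - s) / 2) * G₁ (σ, s)) →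
        (∀ p ∈ Dtri,
          G₂ p = -(1 / 4) * (∫ s in p.2..p.1, lam₂ (s / 2)) +
            (1 / 4) * ∫ σ in p.2..p.1, ∫ s in (0:ℝ)..p.2, lam₂ ((σ - s) / 2) * G₂ (σ, s)) →
        ContinuousOn H₁ Dtri → ContinuousOn H₂ Dtri →
        (∀ p ∈ Dtri,
          H₁ p = -(1 / 4) * (∫ s in p.2..p.1, μ₁ (s / 2)) +
            (1 / 4) * ∫ σ in p.2..p.1, ∫ s in (0:ℝ)..p.2,
              (μ₁ ((σ - s) / 2) * G₁ (σ, s) + lam₁ ((σ - s) / 2) * H₁ (σ, s))) →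
        (∀ p ∈ Dtri,
          H₂ p = -(1 / 4) * (∫ s in p.2..p.1, μ₂ (s / 2)) +
            (1 / 4) * ∫ σ in p.2..p.1, ∫ s in (0:ℝ)..p.2,
              (μ₂ ((σ - s) / 2) * G₂ (σ, s) + lam₂ ((σ - s) / 2) * H₂ (σ, s))) →
        ∀ dLam dMu : ℝ,
          (∀ x ∈ Set.Icc (0:ℝ) 1, |lam₁ x - lam₂ x| ≤ dLam) →
          (∀ x ∈ Set.Icc (0:ℝ) 1, |μ₁ x - μ₂ x| ≤ dMu) →
          ∀ p ∈ Dtri, |H₁ p - H₂ p| ≤ A * (dLam + dMu) := by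
  set E := Real.exp (2 * lambdaBar) with hEdef
  have hE : 0 < E := Real.exp_pos _
  set BG := 4 / 3 * (lambdaBar / 2 + 0 / (4 * lambdaBar)) * E with hBGdef
  have hBG : 0 < BG := by
    rw [hBGdef, zero_div, add_zero]
    exact mul_pos (mul_pos (by norm_num) (by linarith)) hE
  set BH := 4 / 3 * (alphaBar / 2 + alphaBar * BG / (4 * lambdaBar)) * E with hBHdef
  have hBH : 0 < BH := by
    rw [hBHdef]
    exact mul_pos (mul_pos (by norm_num)
      (add_pos (by linarith) (div_pos (mul_pos halpha hBG) (by linarith)))) hE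
  set CG := 4 / 3 * (1 / 2 + BG / (4 * lambdaBar)) * E with hCGdef
  have hCG : 0 < CG := by
    rw [hCGdef]
    exact mul_pos (mul_pos (by norm_num)
      (add_pos (by norm_num) (div_pos hBG (by linarith)))) hE
  set coef2 := 4 / 3 * ((alphaBar * CG + BH) / (4 * lambdaBar)) * E with hc2def
  have hcoef2 : 0 < coef2 := by
    rw [hc2def]
    exact mul_pos (mul_pos (by norm_num)
      (div_pos (add_pos (mul_pos halpha hCG) hBH) (by linarith))) hE
  refine ⟨CG + coef2, add_pos hCG hcoef2, ?_⟩
  intro lam₁ lam₂ μ₁ μ₂ G₁ G₂ H₁ H₂ hclam₁ hclam₂ hcμ₁ hcμ₂ hblam₁ hblam₂ hbμ₁ hbμ₂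
    hcG₁ hcG₂ heqG₁ heqG₂ hcH₁ hcH₂ heqH₁ heqH₂ dLam dMu hdLam hdMu
  have hdLam0 : 0 ≤ dLam := le_trans (abs_nonneg _) (hdLam 0 ⟨le_refl _, zero_le_one⟩)
  have hdMu0 : 0 ≤ dMu := le_trans (abs_nonneg _) (hdMu 0 ⟨le_refl _, zero_le_one⟩)
  -- continuity of composed coefficient functions
  have hwc : Continuous (fun q : ℝ × ℝ => (q.1 - q.2) / 2) :=
    (continuous_fst.sub continuous_snd).div_const 2
  have hlc₁ : ContinuousOn (fun q : ℝ × ℝ => lam₁ ((q.1 - q.2) / 2)) Dtri :=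
    hclam₁.comp hwc.continuousOn (fun q hq => half_diff_mem hq)
  have hlc₂ : ContinuousOn (fun q : ℝ × ℝ => lam₂ ((q.1 - q.2) / 2)) Dtri :=
    hclam₂.comp hwc.continuousOn (fun q hq => half_diff_mem hq)
  have hmc₁ : ContinuousOn (fun q : ℝ × ℝ => μ₁ ((q.1 - q.2) / 2)) Dtri :=
    hcμ₁.comp hwc.continuousOn (fun q hq => half_diff_mem hq)
  have hmc₂ : ContinuousOn (fun q : ℝ × ℝ => μ₂ ((q.1 - q.2) / 2)) Dtri :=
    hcμ₂.comp hwc.continuousOn (fun q hq => half_diff_mem hq)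
  -- Step 1: uniform bound on G₁
  have hG1bd : ∀ q ∈ Dtri, |G₁ q| ≤ BG := by
    have hmain := lemB G₁ (fun q => lam₁ ((q.1 - q.2) / 2) * G₁ q)
      (lambdaBar / 2) 0 lambdaBar (by linarith) le_rfl hlam hcG₁ ?_ ?_
    · intro q hq
      calc |G₁ q| ≤ 4 / 3 * (lambdaBar / 2 + 0 / (4 * lambdaBar)) * Real.exp (2 * lambdaBar) :=
            hmain q hq
        _ = BG := by rw [hBGdef, hEdef]
    · intro p hp
      obtain ⟨hη, hηξ, hsum⟩ := hp
      show |G₁ p| ≤ lambdaBar / 2 + 1 / 4 *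
        |∫ σ in p.2..p.1, ∫ s in (0:ℝ)..p.2, lam₁ ((σ - s) / 2) * G₁ (σ, s)|
      rw [heqG₁ p ⟨hη, hηξ, hsum⟩]
      refine (quarter_abs _ _).trans ?_
      have := single_bound lam₁ lambdaBar hη hηξ hsum hblam₁
      linarith
    · intro q hq
      show |lam₁ ((q.1 - q.2) / 2) * G₁ q| ≤ 0 + lambdaBar * |G₁ q|
      rw [abs_mul, zero_add]
      exact mul_le_mul_of_nonneg_right (hblam₁ _ (half_diff_mem hq)) (abs_nonneg _)
  -- Step 2: uniform bound on H₁
  have hH1bd : ∀ q ∈ Dtri, |H₁ q| ≤ BH := by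
    have hmain := lemB H₁ (fun q => μ₁ ((q.1 - q.2) / 2) * G₁ q + lam₁ ((q.1 - q.2) / 2) * H₁ q)
      (alphaBar / 2) (alphaBar * BG) lambdaBar (by linarith)
      (by positivity) hlam hcH₁ ?_ ?_
    · intro q hq
      calc |H₁ q| ≤ 4 / 3 * (alphaBar / 2 + alphaBar * BG / (4 * lambdaBar)) *
            Real.exp (2 * lambdaBar) := hmain q hq
        _ = BH := by rw [hBHdef, hEdef]
    · intro p hp
      obtain ⟨hη, hηξ, hsum⟩ := hp
      show |H₁ p| ≤ alphaBar / 2 + 1 / 4 *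
        |∫ σ in p.2..p.1, ∫ s in (0:ℝ)..p.2,
          (μ₁ ((σ - s) / 2) * G₁ (σ, s) + lam₁ ((σ - s) / 2) * H₁ (σ, s))|
      rw [heqH₁ p ⟨hη, hηξ, hsum⟩]
      refine (quarter_abs _ _).trans ?_
      have := single_bound μ₁ alphaBar hη hηξ hsum hbμ₁
      linarith
    · intro q hq
      show |μ₁ ((q.1 - q.2) / 2) * G₁ q + lam₁ ((q.1 - q.2) / 2) * H₁ q| ≤
        alphaBar * BG + lambdaBar * |H₁ q|
      refine (abs_add_le _ _).trans ?_
      rw [abs_mul, abs_mul]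
      have t1 : |μ₁ ((q.1 - q.2) / 2)| * |G₁ q| ≤ alphaBar * BG :=
        mul_le_mul (hbμ₁ _ (half_diff_mem hq)) (hG1bd q hq) (abs_nonneg _) halpha.le
      have t2 : |lam₁ ((q.1 - q.2) / 2)| * |H₁ q| ≤ lambdaBar * |H₁ q| :=
        mul_le_mul_of_nonneg_right (hblam₁ _ (half_diff_mem hq)) (abs_nonneg _)
      linarith
  -- Step 3: bound on G₁ - G₂
  have hdGbd : ∀ q ∈ Dtri, |G₁ q - G₂ q| ≤ CG * dLam := by
    have hmain := lemB (fun q => G₁ q - G₂ q)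
      (fun q => lam₁ ((q.1 - q.2) / 2) * G₁ q - lam₂ ((q.1 - q.2) / 2) * G₂ q)
      (dLam / 2) (dLam * BG) lambdaBar (by linarith) (by positivity) hlam (hcG₁.sub hcG₂) ?_ ?_
    · intro q hq
      have h := hmain q hq
      have heq : 4 / 3 * (dLam / 2 + dLam * BG / (4 * lambdaBar)) * Real.exp (2 * lambdaBar)
          = CG * dLam := by
        rw [hCGdef, hBGdef, hEdef]; field_simp
      calc |G₁ q - G₂ q| ≤ 4 / 3 * (dLam / 2 + dLam * BG / (4 * lambdaBar)) *
            Real.exp (2 * lambdaBar) := h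
        _ = CG * dLam := heq
    · intro p hp
      obtain ⟨hη, hηξ, hsum⟩ := hp
      show |G₁ p - G₂ p| ≤ dLam / 2 + 1 / 4 *
        |∫ σ in p.2..p.1, ∫ s in (0:ℝ)..p.2,
          (lam₁ ((σ - s) / 2) * G₁ (σ, s) - lam₂ ((σ - s) / 2) * G₂ (σ, s))|
      have hI := intervalIntegral.integral_sub
        (singleIntegrable lam₁ hclam₁ hη hηξ (by linarith))
        (singleIntegrable lam₂ hclam₂ hη hηξ (by linarith))
      have hJ := split_integral (fun σ s => lam₁ ((σ - s) / 2) * G₁ (σ, s))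
        (fun σ s => lam₂ ((σ - s) / 2) * G₂ (σ, s))
        (hlc₁.mul hcG₁) (hlc₂.mul hcG₂) hη hηξ hsum
      have heq2 : G₁ p - G₂ p =
          -(1 / 4) * (∫ s in p.2..p.1, (lam₁ (s / 2) - lam₂ (s / 2))) +
          1 / 4 * (∫ σ in p.2..p.1, ∫ s in (0:ℝ)..p.2,
            (lam₁ ((σ - s) / 2) * G₁ (σ, s) - lam₂ ((σ - s) / 2) * G₂ (σ, s))) := by
        rw [heqG₁ p ⟨hη, hηξ, hsum⟩, heqG₂ p ⟨hη, hηξ, hsum⟩, hI, ← hJ]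
        ring
      rw [heq2]
      refine (quarter_abs _ _).trans ?_
      have := single_bound (fun x => lam₁ x - lam₂ x) dLam hη hηξ hsum hdLam
      linarith
    · intro q hq
      show |lam₁ ((q.1 - q.2) / 2) * G₁ q - lam₂ ((q.1 - q.2) / 2) * G₂ q| ≤
        dLam * BG + lambdaBar * |G₁ q - G₂ q|
      have e : lam₁ ((q.1 - q.2) / 2) * G₁ q - lam₂ ((q.1 - q.2) / 2) * G₂ q =
          (lam₁ ((q.1 - q.2) / 2) - lam₂ ((q.1 - q.2) / 2)) * G₁ q +
          lam₂ ((q.1 - q.2) / 2) * (G₁ q - G₂ q) := by ring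
      rw [e]
      refine (abs_add_le _ _).trans ?_
      rw [abs_mul, abs_mul]
      have t1 : |lam₁ ((q.1 - q.2) / 2) - lam₂ ((q.1 - q.2) / 2)| * |G₁ q| ≤ dLam * BG :=
        mul_le_mul (hdLam _ (half_diff_mem hq)) (hG1bd q hq) (abs_nonneg _) hdLam0
      have t2 : |lam₂ ((q.1 - q.2) / 2)| * |G₁ q - G₂ q| ≤ lambdaBar * |G₁ q - G₂ q| :=
        mul_le_mul_of_nonneg_right (hblam₂ _ (half_diff_mem hq)) (abs_nonneg _)
      linarith
  -- Step 4: bound on H₁ - H₂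
  have hmain := lemB (fun q => H₁ q - H₂ q)
    (fun q => (μ₁ ((q.1 - q.2) / 2) * G₁ q + lam₁ ((q.1 - q.2) / 2) * H₁ q) -
      (μ₂ ((q.1 - q.2) / 2) * G₂ q + lam₂ ((q.1 - q.2) / 2) * H₂ q))
    (dMu / 2) (dMu * BG + alphaBar * (CG * dLam) + dLam * BH) lambdaBar
    (by linarith)
    (by have := mul_nonneg hdMu0 hBG.le
        have := mul_nonneg halpha.le (mul_nonneg hCG.le hdLam0)
        have := mul_nonneg hdLam0 hBH.le
        linarith)
    hlam (hcH₁.sub hcH₂) ?_ ?_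
  · intro p hp
    have h := hmain p hp
    have hM : 4 / 3 * (dMu / 2 + (dMu * BG + alphaBar * (CG * dLam) + dLam * BH) /
        (4 * lambdaBar)) * Real.exp (2 * lambdaBar) = CG * dMu + coef2 * dLam := by
      rw [hc2def, hCGdef, hEdef]; field_simp; ring
    have hA2 : (CG + coef2) * (dLam + dMu) =
        CG * dMu + coef2 * dLam + (CG * dLam + coef2 * dMu) := by ring
    have n1 : 0 ≤ CG * dLam := mul_nonneg hCG.le hdLam0
    have n2 : 0 ≤ coef2 * dMu := mul_nonneg hcoef2.le hdMu0
    calc |H₁ p - H₂ p| ≤ 4 / 3 * (dMu / 2 + (dMu * BG + alphaBar * (CG * dLam) + dLam * BH) /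
          (4 * lambdaBar)) * Real.exp (2 * lambdaBar) := h
      _ = CG * dMu + coef2 * dLam := hM
      _ ≤ (CG + coef2) * (dLam + dMu) := by rw [hA2]; linarith
  · intro p hp
    obtain ⟨hη, hηξ, hsum⟩ := hp
    show |H₁ p - H₂ p| ≤ dMu / 2 + 1 / 4 *
      |∫ σ in p.2..p.1, ∫ s in (0:ℝ)..p.2,
        ((μ₁ ((σ - s) / 2) * G₁ (σ, s) + lam₁ ((σ - s) / 2) * H₁ (σ, s)) -
         (μ₂ ((σ - s) / 2) * G₂ (σ, s) + lam₂ ((σ - s) / 2) * H₂ (σ, s)))|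
    have hI := intervalIntegral.integral_sub
      (singleIntegrable μ₁ hcμ₁ hη hηξ (by linarith))
      (singleIntegrable μ₂ hcμ₂ hη hηξ (by linarith))
    have hJ := split_integral
      (fun σ s => μ₁ ((σ - s) / 2) * G₁ (σ, s) + lam₁ ((σ - s) / 2) * H₁ (σ, s))
      (fun σ s => μ₂ ((σ - s) / 2) * G₂ (σ, s) + lam₂ ((σ - s) / 2) * H₂ (σ, s))
      ((hmc₁.mul hcG₁).add (hlc₁.mul hcH₁)) ((hmc₂.mul hcG₂).add (hlc₂.mul hcH₂)) hη hηξ hsum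
    have heq2 : H₁ p - H₂ p =
        -(1 / 4) * (∫ s in p.2..p.1, (μ₁ (s / 2) - μ₂ (s / 2))) +
        1 / 4 * (∫ σ in p.2..p.1, ∫ s in (0:ℝ)..p.2,
          ((μ₁ ((σ - s) / 2) * G₁ (σ, s) + lam₁ ((σ - s) / 2) * H₁ (σ, s)) -
           (μ₂ ((σ - s) / 2) * G₂ (σ, s) + lam₂ ((σ - s) / 2) * H₂ (σ, s)))) := by
      rw [heqH₁ p ⟨hη, hηξ, hsum⟩, heqH₂ p ⟨hη, hηξ, hsum⟩, hI, ← hJ]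
      ring
    rw [heq2]
    refine (quarter_abs _ _).trans ?_
    have := single_bound (fun x => μ₁ x - μ₂ x) dMu hη hηξ hsum hdMu
    linarith
  · intro q hq
    show |(μ₁ ((q.1 - q.2) / 2) * G₁ q + lam₁ ((q.1 - q.2) / 2) * H₁ q) -
         (μ₂ ((q.1 - q.2) / 2) * G₂ q + lam₂ ((q.1 - q.2) / 2) * H₂ q)| ≤
      (dMu * BG + alphaBar * (CG * dLam) + dLam * BH) + lambdaBar * |H₁ q - H₂ q|
    have e : (μ₁ ((q.1 - q.2) / 2) * G₁ q + lam₁ ((q.1 - q.2) / 2) * H₁ q) -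
        (μ₂ ((q.1 - q.2) / 2) * G₂ q + lam₂ ((q.1 - q.2) / 2) * H₂ q) =
        ((μ₁ ((q.1 - q.2) / 2) - μ₂ ((q.1 - q.2) / 2)) * G₁ q +
         μ₂ ((q.1 - q.2) / 2) * (G₁ q - G₂ q)) +
        ((lam₁ ((q.1 - q.2) / 2) - lam₂ ((q.1 - q.2) / 2)) * H₁ q +
         lam₂ ((q.1 - q.2) / 2) * (H₁ q - H₂ q)) := by ring
    rw [e]
    refine (abs_add_le _ _).trans ?_
    have h1 := (abs_add_le ((μ₁ ((q.1 - q.2) / 2) - μ₂ ((q.1 - q.2) / 2)) * G₁ q)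
      (μ₂ ((q.1 - q.2) / 2) * (G₁ q - G₂ q)))
    have h2 := (abs_add_le ((lam₁ ((q.1 - q.2) / 2) - lam₂ ((q.1 - q.2) / 2)) * H₁ q)
      (lam₂ ((q.1 - q.2) / 2) * (H₁ q - H₂ q)))
    have t1 : |(μ₁ ((q.1 - q.2) / 2) - μ₂ ((q.1 - q.2) / 2)) * G₁ q| ≤ dMu * BG := by
      rw [abs_mul]
      exact mul_le_mul (hdMu _ (half_diff_mem hq)) (hG1bd q hq) (abs_nonneg _) hdMu0
    have t2 : |μ₂ ((q.1 - q.2) / 2) * (G₁ q - G₂ q)| ≤ alphaBar * (CG * dLam) := by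
      rw [abs_mul]
      exact mul_le_mul (hbμ₂ _ (half_diff_mem hq)) (hdGbd q hq) (abs_nonneg _) halpha.le
    have t3 : |(lam₁ ((q.1 - q.2) / 2) - lam₂ ((q.1 - q.2) / 2)) * H₁ q| ≤ dLam * BH := by
      rw [abs_mul]
      exact mul_le_mul (hdLam _ (half_diff_mem hq)) (hH1bd q hq) (abs_nonneg _) hdLam0
    have t4 : |lam₂ ((q.1 - q.2) / 2) * (H₁ q - H₂ q)| ≤ lambdaBar * |H₁ q - H₂ q| := by
      rw [abs_mul]
      exact mul_le_mul_of_nonneg_right (hblam₂ _ (half_diff_mem hq)) (abs_nonneg _)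
    linarith
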